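/- Every nonzero real binary cubic form can be brought by a real linear change of variables to exactly one of the four normal forms: x³/6, x²y/2, x³/6 + y³/6, or x²y/2 − xy²/2. -/

import Mathlib

open Matrix

/-- The binary cubic form with coefficients `a,b,c,d`:
`a x³ + b x²y + c xy² + d y³`. -/
def binCubic (a b c d : ℝ) : (Fin 2 → ℝ) → ℝ :=
  fun v => a * v 0 ^ 3 + b * v 0 ^ 2 * v 1 + c * v 0 * v 1 ^ 2 + d * v 1 ^ 3

/-- Equivalence of binary cubic forms under linear change of variables. -/
def CubicEquiv (F G : (Fin 2 → ℝ) → ℝ) : Prop :=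
  ∃ g : Matrix (Fin 2) (Fin 2) ℝ, IsUnit g.det ∧ ∀ v, F (g.mulVec v) = G v

/-- The four normal forms `x³/6`, `x²y/2`, `x³/6 + y³/6`, `x²y/2 − xy²/2`. -/
noncomputable def normalFormBinary : Fin 4 → (Fin 2 → ℝ) → ℝ
  | 0 => binCubic (1/6) 0 0 0
  | 1 => binCubic 0 (1/2) 0 0
  | 2 => binCubic (1/6) 0 0 (1/6)
  | 3 => binCubic 0 (1/2) (-(1/2)) 0

/-! ### Basic properties of `CubicEquiv` -/

lemma cubicEquiv_refl (F : (Fin 2 → ℝ) → ℝ) : CubicEquiv F F :=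
  ⟨1, by simp, fun v => by simp⟩

lemma cubicEquiv_symm {F G : (Fin 2 → ℝ) → ℝ} (h : CubicEquiv F G) : CubicEquiv G F := by
  obtain ⟨g, hg, hfg⟩ := h
  refine ⟨g⁻¹, ?_, fun v => ?_⟩
  · rw [Matrix.det_nonsing_inv, Ring.inverse_eq_inv]
    exact (isUnit_iff_ne_zero.2 (inv_ne_zero (isUnit_iff_ne_zero.1 hg)))
  · rw [← hfg (g⁻¹.mulVec v), Matrix.mulVec_mulVec, Matrix.mul_nonsing_inv g hg, Matrix.one_mulVec]

lemma cubicEquiv_trans {F G H : (Fin 2 → ℝ) → ℝ} (h1 : CubicEquiv F G) (h2 : CubicEquiv G H) :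
    CubicEquiv F H := by
  obtain ⟨g, hg, hfg⟩ := h1
  obtain ⟨g', hg', hgh⟩ := h2
  refine ⟨g * g', by rw [Matrix.det_mul]; exact hg.mul hg', fun v => ?_⟩
  rw [← Matrix.mulVec_mulVec, hfg, hgh]

/-! ### Coefficient transformation -/

def cA (a b c d p q r s : ℝ) : ℝ := a*p^3 + b*p^2*r + c*p*r^2 + d*r^3
def cB (a b c d p q r s : ℝ) : ℝ := 3*a*p^2*q + b*(p^2*s + 2*p*q*r) + c*(2*p*r*s + q*r^2) + 3*d*r^2*s
def cC (a b c d p q r s : ℝ) : ℝ := 3*a*p*q^2 + b*(q^2*r + 2*p*q*s) + c*(p*s^2 + 2*q*r*s) + 3*d*r*s^2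
def cD (a b c d p q r s : ℝ) : ℝ := a*q^3 + b*q^2*s + c*q*s^2 + d*s^3

lemma binCubic_comp (a b c d p q r s : ℝ) (v : Fin 2 → ℝ) :
    binCubic a b c d ((!![p,q;r,s]).mulVec v)
      = binCubic (cA a b c d p q r s) (cB a b c d p q r s) (cC a b c d p q r s) (cD a b c d p q r s) v := by
  simp [binCubic, mulVec, Fin.sum_univ_two, cA, cB, cC, cD,
    Matrix.cons_val_zero, Matrix.cons_val_one, Matrix.vecHead, Matrix.vecTail, Function.comp]
  ring

lemma equiv_transform (a b c d p q r s : ℝ) (hdet : p*s - q*r ≠ 0) :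
    CubicEquiv (binCubic a b c d)
      (binCubic (cA a b c d p q r s) (cB a b c d p q r s) (cC a b c d p q r s) (cD a b c d p q r s)) := by
  refine ⟨!![p,q;r,s], ?_, binCubic_comp a b c d p q r s⟩
  rw [Matrix.det_fin_two_of]
  exact isUnit_iff_ne_zero.2 (by simpa using hdet)

lemma equiv_of_eq {F : (Fin 2 → ℝ) → ℝ} {A B C D A' B' C' D' : ℝ}
    (h : CubicEquiv F (binCubic A B C D))
    (e1 : A = A') (e2 : B = B') (e3 : C = C') (e4 : D = D') :
    CubicEquiv F (binCubic A' B' C' D') := by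
  subst e1; subst e2; subst e3; subst e4; exact h

lemma binCubic_coeff_eq {a b c d a' b' c' d' : ℝ}
    (h : ∀ v, binCubic a b c d v = binCubic a' b' c' d' v) :
    a = a' ∧ b = b' ∧ c = c' ∧ d = d' := by
  have h1 := h ![1, 0]
  have h2 := h ![0, 1]
  have h3 := h ![1, 1]
  have h4 := h ![1, -1]
  simp [binCubic] at h1 h2 h3 h4
  refine ⟨by linarith, by linarith, by linarith, by linarith⟩

/-- Eliminating an equivalence between explicit cubics. -/
lemma equiv_elim {a b c d a' b' c' d' : ℝ}
    (h : CubicEquiv (binCubic a b c d) (binCubic a' b' c' d')) :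
    ∃ p q r s : ℝ, p*s - q*r ≠ 0 ∧
      a' = cA a b c d p q r s ∧ b' = cB a b c d p q r s ∧
      c' = cC a b c d p q r s ∧ d' = cD a b c d p q r s := by
  obtain ⟨g, hg, hfg⟩ := h
  refine ⟨g 0 0, g 0 1, g 1 0, g 1 1, ?_, ?_⟩
  · rw [← Matrix.det_fin_two g]
    exact isUnit_iff_ne_zero.1 hg
  · have key : ∀ v, binCubic (cA a b c d (g 0 0) (g 0 1) (g 1 0) (g 1 1))
        (cB a b c d (g 0 0) (g 0 1) (g 1 0) (g 1 1))
        (cC a b c d (g 0 0) (g 0 1) (g 1 0) (g 1 1))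
        (cD a b c d (g 0 0) (g 0 1) (g 1 0) (g 1 1)) v = binCubic a' b' c' d' v := by
      intro v
      rw [← binCubic_comp, ← Matrix.eta_fin_two g, hfg]
    obtain ⟨e1, e2, e3, e4⟩ := binCubic_coeff_eq key
    exact ⟨e1.symm, e2.symm, e3.symm, e4.symm⟩

/-! ### The discriminant invariant -/

def disc (a b c d : ℝ) : ℝ := 18*a*b*c*d - 4*b^3*d + b^2*c^2 - 4*a*c^3 - 27*a^2*d^2

lemma disc_covariant (a b c d p q r s : ℝ) :
    disc (cA a b c d p q r s) (cB a b c d p q r s) (cC a b c d p q r s) (cD a b c d p q r s)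
      = (p*s - q*r)^6 * disc a b c d := by
  simp only [disc, cA, cB, cC, cD]
  ring

lemma disc_rel {a b c d a' b' c' d' : ℝ}
    (h : CubicEquiv (binCubic a b c d) (binCubic a' b' c' d')) :
    ∃ t : ℝ, 0 < t ∧ disc a' b' c' d' = t * disc a b c d := by
  obtain ⟨p, q, r, s, hdet, e1, e2, e3, e4⟩ := equiv_elim h
  refine ⟨(p*s - q*r)^6, ?_, ?_⟩
  · exact lt_of_le_of_ne (by positivity) (Ne.symm (pow_ne_zero 6 hdet))
  · rw [e1, e2, e3, e4, disc_covariant]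
/-! ### Distinguishing the normal forms -/

lemma not_equiv_01 : ¬ CubicEquiv (binCubic (1/6 : ℝ) 0 0 0) (binCubic 0 (1/2) 0 0) := by
  rintro ⟨g, hg, hfg⟩
  have h1 := hfg ![1, 0]
  have h2 := hfg ![0, 1]
  simp [binCubic, mulVec, Fin.sum_univ_two, Matrix.vecHead, Matrix.vecTail, Function.comp] at h1 h2
  have : g.det = 0 := by rw [Matrix.det_fin_two, h1, h2]; ring
  rw [this] at hg
  simp at hg

lemma normalFormBinary_zero : normalFormBinary 0 = binCubic (1/6) 0 0 0 := rfl
lemma normalFormBinary_one : normalFormBinary 1 = binCubic 0 (1/2) 0 0 := rfl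
lemma normalFormBinary_two : normalFormBinary 2 = binCubic (1/6) 0 0 (1/6) := rfl
lemma normalFormBinary_three : normalFormBinary 3 = binCubic 0 (1/2) (-(1/2)) 0 := rfl

lemma normal_unique {i j : Fin 4} (h : CubicEquiv (normalFormBinary i) (normalFormBinary j)) :
    i = j := by
  fin_cases i <;> fin_cases j <;> (try rfl) <;> exfalso
  -- 0,1
  · exact not_equiv_01 h
  -- 0,2
  · obtain ⟨t, ht, he⟩ := disc_rel (a := 1/6) (b := 0) (c := 0) (d := 0)
      (a' := 1/6) (b' := 0) (c' := 0) (d' := 1/6) h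
    simp [disc] at he; try nlinarith
  -- 0,3
  · obtain ⟨t, ht, he⟩ := disc_rel (a := 1/6) (b := 0) (c := 0) (d := 0)
      (a' := 0) (b' := 1/2) (c' := -(1/2)) (d' := 0) h
    simp [disc] at he; try nlinarith
  -- 1,0
  · exact not_equiv_01 (cubicEquiv_symm h)
  -- 1,2
  · obtain ⟨t, ht, he⟩ := disc_rel (a := 0) (b := 1/2) (c := 0) (d := 0)
      (a' := 1/6) (b' := 0) (c' := 0) (d' := 1/6) h
    simp [disc] at he; try nlinarith
  -- 1,3
  · obtain ⟨t, ht, he⟩ := disc_rel (a := 0) (b := 1/2) (c := 0) (d := 0)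
      (a' := 0) (b' := 1/2) (c' := -(1/2)) (d' := 0) h
    simp [disc] at he; try nlinarith
  -- 2,0
  · obtain ⟨t, ht, he⟩ := disc_rel (a := 1/6) (b := 0) (c := 0) (d := 1/6)
      (a' := 1/6) (b' := 0) (c' := 0) (d' := 0) h
    simp [disc] at he; try nlinarith
  -- 2,1
  · obtain ⟨t, ht, he⟩ := disc_rel (a := 1/6) (b := 0) (c := 0) (d := 1/6)
      (a' := 0) (b' := 1/2) (c' := 0) (d' := 0) h
    simp [disc] at he; try nlinarith
  -- 2,3
  · obtain ⟨t, ht, he⟩ := disc_rel (a := 1/6) (b := 0) (c := 0) (d := 1/6)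
      (a' := 0) (b' := 1/2) (c' := -(1/2)) (d' := 0) h
    simp [disc] at he; try nlinarith
  -- 3,0
  · obtain ⟨t, ht, he⟩ := disc_rel (a := 0) (b := 1/2) (c := -(1/2)) (d := 0)
      (a' := 1/6) (b' := 0) (c' := 0) (d' := 0) h
    simp [disc] at he; try nlinarith
  -- 3,1
  · obtain ⟨t, ht, he⟩ := disc_rel (a := 0) (b := 1/2) (c := -(1/2)) (d := 0)
      (a' := 0) (b' := 1/2) (c' := 0) (d' := 0) h
    simp [disc] at he; try nlinarith
  -- 3,2
  · obtain ⟨t, ht, he⟩ := disc_rel (a := 0) (b := 1/2) (c := -(1/2)) (d := 0)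
      (a' := 1/6) (b' := 0) (c' := 0) (d' := 1/6) h
    simp [disc] at he; try nlinarith
/-! ### Existence: auxiliary algebra -/

lemma exists_cube_eq (r : ℝ) : ∃ x : ℝ, x ^ 3 = r := by
  rcases le_or_gt 0 r with hr | hr
  · refine ⟨r ^ ((3:ℝ)⁻¹), ?_⟩
    rw [← Real.rpow_natCast (r ^ ((3:ℝ)⁻¹)) 3, ← Real.rpow_mul hr]
    norm_num
  · obtain ⟨x, hx⟩ : ∃ x : ℝ, x ^ 3 = -r := by
      refine ⟨(-r) ^ ((3:ℝ)⁻¹), ?_⟩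
      rw [← Real.rpow_natCast ((-r) ^ ((3:ℝ)⁻¹)) 3, ← Real.rpow_mul (by linarith)]
      norm_num
    exact ⟨-x, by rw [neg_pow]; rw [hx]; ring⟩

lemma exists_pos_cubic_root {a : ℝ} (b c d : ℝ) (ha : 0 < a) :
    ∃ t : ℝ, a * t ^ 3 + b * t ^ 2 + c * t + d = 0 := by
  set f : ℝ → ℝ := fun t => a * t ^ 3 + b * t ^ 2 + c * t + d with hf
  set M : ℝ := (|b| + |c| + |d|) / a + 1 with hM
  have hM1 : 1 ≤ M := by
    rw [hM]
    have : 0 ≤ (|b| + |c| + |d|) / a := by positivity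
    linarith
  have hMa : a * M = |b| + |c| + |d| + a := by
    rw [hM]; field_simp
  have hM0 : (0:ℝ) ≤ M := by linarith
  have haM2 : 0 < a * M ^ 2 := by positivity
  have hcM : |c| * M * (M - 1) ≥ 0 := mul_nonneg (mul_nonneg (abs_nonneg c) hM0) (by linarith)
  have hcM2 : -|c| * M ≤ c * M := mul_le_mul_of_nonneg_right (neg_abs_le c) hM0
  have hcM3 : c * M ≤ |c| * M := mul_le_mul_of_nonneg_right (le_abs_self c) hM0
  have hdM : |d| * (M ^ 2 - 1) ≥ 0 := mul_nonneg (abs_nonneg d) (by nlinarith)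
  have key : a * M ^ 3 = (|b| + |c| + |d|) * M ^ 2 + a * M ^ 2 := by nlinarith [hMa]
  have hfM : 0 < f M := by
    have hb : b * M ^ 2 ≥ -(|b| * M ^ 2) := by nlinarith [neg_abs_le b, sq_nonneg M]
    have hc : c * M ≥ -(|c| * M ^ 2) := by nlinarith [hcM, hcM2]
    have hd : d ≥ -(|d| * M ^ 2) := by nlinarith [hdM, neg_abs_le d]
    simp only [hf]
    nlinarith [sq_nonneg M]
  have hfm : f (-M) < 0 := by
    have hb : b * (-M) ^ 2 ≤ |b| * M ^ 2 := by nlinarith [le_abs_self b, sq_nonneg M]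
    have hc : c * (-M) ≤ |c| * M ^ 2 := by nlinarith [hcM, hcM2]
    have hd : d ≤ |d| * M ^ 2 := by nlinarith [hdM, le_abs_self d]
    simp only [hf]
    nlinarith [sq_nonneg M]
  have hcont : ContinuousOn f (Set.Icc (-M) M) := by fun_prop
  have hmem : (0:ℝ) ∈ Set.Icc (f (-M)) (f M) := ⟨le_of_lt hfm, le_of_lt hfM⟩
  obtain ⟨t, _, ht⟩ := intermediate_value_Icc (by linarith : -M ≤ M) hcont hmem
  exact ⟨t, ht⟩

lemma exists_cubic_root {a : ℝ} (b c d : ℝ) (ha : a ≠ 0) :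
    ∃ t : ℝ, a * t ^ 3 + b * t ^ 2 + c * t + d = 0 := by
  rcases ha.lt_or_gt with h | h
  · obtain ⟨t, ht⟩ := exists_pos_cubic_root (-b) (-c) (-d) (by linarith : (0:ℝ) < -a)
    exact ⟨t, by linarith⟩
  · exact exists_pos_cubic_root b c d h

/-! ### Existence: case lemmas -/

/-- `a x³` with `a ≠ 0` reduces to the normal form `x³/6`. -/
lemma case_x3 {a : ℝ} (ha : a ≠ 0) : CubicEquiv (binCubic a 0 0 0) (normalFormBinary 0) := by
  obtain ⟨l, hl⟩ := exists_cube_eq (1/(6*a))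
  have hl0 : l ≠ 0 := by
    intro h0; rw [h0] at hl; simp at hl
    exact ha (by linarith)
  rw [normalFormBinary_zero]
  refine equiv_of_eq (equiv_transform a 0 0 0 l 0 0 1 (by simpa using hl0)) ?_ ?_ ?_ ?_ <;>
    simp [cA, cB, cC, cD, hl] <;> field_simp

/-- `a x³ + b x²y` with `b ≠ 0` reduces to `x²y/2`. -/
lemma case_x2y {a b : ℝ} (hb : b ≠ 0) : CubicEquiv (binCubic a b 0 0) (normalFormBinary 1) := by
  rw [normalFormBinary_one]
  have hdet : (1:ℝ) * (1/(2*b)) - 0 * (-a/b) ≠ 0 := by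
    field_simp; simp [hb]
  refine equiv_of_eq (equiv_transform a b 0 0 1 0 (-a/b) (1/(2*b)) hdet) ?_ ?_ ?_ ?_ <;>
    simp [cA, cB, cC, cD] <;> field_simp <;> ring
/-- `c xy²` with `c ≠ 0` reduces to `x²y/2`. -/
lemma case_xy2 {c : ℝ} (hc : c ≠ 0) : CubicEquiv (binCubic 0 0 c 0) (normalFormBinary 1) := by
  rw [normalFormBinary_one]
  rcases hc.lt_or_gt with h | h
  · -- c < 0 : use q = -1, r = sqrt (-1/(2c))
    have hrarg : (0:ℝ) < -1/(2*c) := div_pos_of_neg_of_neg (by norm_num) (by linarith)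
    set r : ℝ := Real.sqrt (-1/(2*c)) with hr
    have hr2 : r ^ 2 = -1/(2*c) := Real.sq_sqrt hrarg.le
    have hrne : r ≠ 0 := ne_of_gt (Real.sqrt_pos.2 hrarg)
    have hdet : (0:ℝ) * 0 - (-1) * r ≠ 0 := by simpa using hrne
    refine equiv_of_eq (equiv_transform 0 0 c 0 0 (-1) r 0 hdet) ?_ ?_ ?_ ?_ <;>
      simp [cA, cB, cC, cD, hr2] <;> field_simp <;> ring
  · -- c > 0 : use q = 1, r = sqrt (1/(2c))
    have hrarg : (0:ℝ) < 1/(2*c) := by positivity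
    set r : ℝ := Real.sqrt (1/(2*c)) with hr
    have hr2 : r ^ 2 = 1/(2*c) := Real.sq_sqrt hrarg.le
    have hrne : r ≠ 0 := ne_of_gt (Real.sqrt_pos.2 hrarg)
    have hdet : (0:ℝ) * 0 - 1 * r ≠ 0 := by simpa using hrne
    refine equiv_of_eq (equiv_transform 0 0 c 0 0 1 r 0 hdet) ?_ ?_ ?_ ?_ <;>
      simp [cA, cB, cC, cD, hr2] <;> field_simp <;> ring

/-- Negation equivalence: `binCubic e 0 c 0` is equivalent to `binCubic (-e) 0 (-c) 0`. -/
lemma case_negI (e c : ℝ) : CubicEquiv (binCubic e 0 c 0) (binCubic (-e) 0 (-c) 0) := by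
  have hdet : (-1:ℝ) * (-1) - 0 * 0 ≠ 0 := by norm_num
  refine equiv_of_eq (equiv_transform e 0 c 0 (-1) 0 0 (-1) hdet) ?_ ?_ ?_ ?_ <;>
    simp [cA, cB, cC, cD] <;> ring

/-- `e x³ + c xy²` with `e, c > 0` reduces to `x³/6 + y³/6`. -/
lemma case_pos {e c : ℝ} (he : 0 < e) (hc : 0 < c) :
    CubicEquiv (binCubic e 0 c 0) (normalFormBinary 2) := by
  rw [normalFormBinary_two]
  have he0 : e ≠ 0 := ne_of_gt he
  obtain ⟨l, hl⟩ := exists_cube_eq (1/(24*e))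
  have hl' : 24 * e * l ^ 3 = 1 := by rw [hl]; field_simp
  have hlpos : 0 < l := by
    by_contra h0
    push_neg at h0
    have h1 : l * l ^ 2 ≤ 0 := mul_nonpos_of_nonpos_of_nonneg h0 (sq_nonneg l)
    nlinarith
  have hmarg : (0:ℝ) < 1/(8*c*l) := by positivity
  set m : ℝ := Real.sqrt (1/(8*c*l)) with hm
  have hm2 : m ^ 2 = 1/(8*c*l) := Real.sq_sqrt hmarg.le
  have hm' : 8 * c * l * m ^ 2 = 1 := by
    rw [hm2]; field_simp
  have hmpos : 0 < m := Real.sqrt_pos.2 hmarg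
  have hdet : l * (-m) - l * m ≠ 0 := by nlinarith
  refine equiv_of_eq (equiv_transform e 0 c 0 l l m (-m) hdet) ?_ ?_ ?_ ?_ <;>
    simp only [cA, cB, cC, cD]
  · linear_combination (1/24) * hl' + (1/8) * hm'
  · linear_combination (1/8) * hl' - (1/8) * hm'
  · linear_combination (1/8) * hl' - (1/8) * hm'
  · linear_combination (1/24) * hl' + (1/8) * hm'

/-- `e x³ + c xy²` with `e < 0 < c` reduces to `x²y/2 - xy²/2`. -/
lemma case_neg {e c : ℝ} (he : e < 0) (hc : 0 < c) :
    CubicEquiv (binCubic e 0 c 0) (normalFormBinary 3) := by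
  rw [normalFormBinary_three]
  have he0 : e ≠ 0 := ne_of_lt he
  have hc0 : c ≠ 0 := ne_of_gt hc
  obtain ⟨l, hl⟩ := exists_cube_eq (1/(8*e))
  have hl' : 8 * e * l ^ 3 = 1 := by rw [hl]; field_simp
  have hlneg : l < 0 := by
    by_contra h0
    push_neg at h0
    have h1 : 0 ≤ l * l ^ 2 := mul_nonneg h0 (sq_nonneg l)
    nlinarith
  have hl2 : 0 < l ^ 2 := by nlinarith
  have hrarg : (0:ℝ) < -e*l^2/c := div_pos (by nlinarith) hc
  set r : ℝ := Real.sqrt (-e*l^2/c) with hrdef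
  have hr2 : r ^ 2 = -e*l^2/c := Real.sq_sqrt hrarg.le
  have hr' : c * r ^ 2 = -(e * l ^ 2) := by rw [hr2]; field_simp
  have hrpos : 0 < r := Real.sqrt_pos.2 hrarg
  have hclne : 2*c*l ≠ 0 := ne_of_lt (by nlinarith)
  have hs0arg : (0:ℝ) < -1/(2*c*l) := div_pos_of_neg_of_neg (by norm_num) (by nlinarith)
  set s0 : ℝ := Real.sqrt (-1/(2*c*l)) with hs0def
  have hs02 : s0 ^ 2 = -1/(2*c*l) := Real.sq_sqrt hs0arg.le
  have hs0' : 2 * c * l * s0 ^ 2 = -1 := by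
    rw [hs02]; field_simp; rw [div_self (ne_of_lt hlneg)]
  have hs0pos : 0 < s0 := Real.sqrt_pos.2 hs0arg
  have hsq : (4*c*l*r*s0) ^ 2 = 1 := by
    linear_combination (16*c*l^2*s0^2) * hr' + (-8*e*l^3) * hs0' + hl'
  have hchoice : 4*c*l*r*s0 = 1 ∨ 4*c*l*r*(-s0) = 1 := by
    have hfac : (4*c*l*r*s0 - 1) * (4*c*l*r*s0 + 1) = 0 := by linear_combination hsq
    rcases mul_eq_zero.1 hfac with h1 | h1
    · left; linarith
    · right; linarith
  have main : ∀ s : ℝ, s ≠ 0 → 2*c*l*s^2 = -1 → 4*c*l*r*s = 1 →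
      CubicEquiv (binCubic e 0 c 0) (binCubic 0 (1/2) (-(1/2)) 0) := by
    intro s hsne hs hrs
    have hdet : l * s - 0 * r ≠ 0 := by
      simp only [zero_mul, sub_zero]
      exact mul_ne_zero (by linarith) hsne
    refine equiv_of_eq (equiv_transform e 0 c 0 l 0 r s hdet) ?_ ?_ ?_ ?_ <;>
      simp only [cA, cB, cC, cD]
    · linear_combination l * hr'
    · linear_combination (1/2) * hrs
    · linear_combination (1/2) * hs
    · ring
  rcases hchoice with h1 | h1
  · exact main s0 (by linarith) hs0' h1
  · refine main (-s0) (by intro h0; apply absurd hs0pos; rw [neg_eq_zero] at h0; simp [h0]) ?_ h1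
    rw [neg_pow]; simpa using hs0'
/-! ### Existence: reduction chain -/

lemma red2 {e c : ℝ} (hc : c ≠ 0) :
    ∃ i : Fin 4, CubicEquiv (binCubic e 0 c 0) (normalFormBinary i) := by
  rcases eq_or_ne e 0 with he | he
  · subst he; exact ⟨1, case_xy2 hc⟩
  rcases he.lt_or_gt with he' | he' <;> rcases hc.lt_or_gt with hc' | hc'
  · -- e < 0, c < 0 : negate, then both positive
    exact ⟨2, cubicEquiv_trans (case_negI e c) (case_pos (by linarith) (by linarith))⟩
  · -- e < 0, c > 0
    exact ⟨3, case_neg he' hc'⟩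
  · -- e > 0, c < 0 : negate, then e < 0 < c
    exact ⟨3, cubicEquiv_trans (case_negI e c) (case_neg (by linarith) (by linarith))⟩
  · -- e > 0, c > 0
    exact ⟨2, case_pos he' hc'⟩

lemma red1 {a b c : ℝ} (h : ¬(a = 0 ∧ b = 0 ∧ c = 0)) :
    ∃ i : Fin 4, CubicEquiv (binCubic a b c 0) (normalFormBinary i) := by
  rcases eq_or_ne c 0 with hc | hc
  · subst hc
    rcases eq_or_ne b 0 with hb | hb
    · subst hb
      have ha : a ≠ 0 := by tauto
      exact ⟨0, case_x3 ha⟩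
    · exact ⟨1, case_x2y hb⟩
  · -- shear to kill the b coefficient
    have hdet : (1:ℝ) * 1 - 0 * (-b/(2*c)) ≠ 0 := by norm_num
    have step : CubicEquiv (binCubic a b c 0) (binCubic (a - b^2/(4*c)) 0 c 0) := by
      refine equiv_of_eq (equiv_transform a b c 0 1 0 (-b/(2*c)) 1 hdet) ?_ ?_ ?_ ?_ <;>
        simp only [cA, cB, cC, cD] <;> field_simp <;> ring
    obtain ⟨i, hi⟩ := red2 (e := a - b^2/(4*c)) hc
    exact ⟨i, cubicEquiv_trans step hi⟩

lemma red0 (a b c d : ℝ) :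
    ∃ a' b' c' : ℝ, CubicEquiv (binCubic a b c d) (binCubic a' b' c' 0) := by
  rcases eq_or_ne a 0 with ha | ha
  · -- swap the variables
    subst ha
    have hdet : (0:ℝ) * 0 - 1 * 1 ≠ 0 := by norm_num
    refine ⟨d, c, b, ?_⟩
    refine equiv_of_eq (equiv_transform 0 b c d 0 1 1 0 hdet) ?_ ?_ ?_ ?_ <;>
      simp [cA, cB, cC, cD]
  · obtain ⟨t, ht⟩ := exists_cubic_root b c d ha
    have hdet : (1:ℝ) * 1 - t * 0 ≠ 0 := by norm_num
    refine ⟨cA a b c d 1 t 0 1, cB a b c d 1 t 0 1, cC a b c d 1 t 0 1, ?_⟩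
    refine equiv_of_eq (equiv_transform a b c d 1 t 0 1 hdet) rfl rfl rfl ?_
    simp only [cD]
    linarith

lemma binCubic_zero_fn (v : Fin 2 → ℝ) : binCubic 0 0 0 0 v = 0 := by simp [binCubic]

lemma nonzero_transfer {a b c d a' b' c' d' : ℝ}
    (h : CubicEquiv (binCubic a b c d) (binCubic a' b' c' d'))
    (hne : ¬(a = 0 ∧ b = 0 ∧ c = 0 ∧ d = 0)) :
    ¬(a' = 0 ∧ b' = 0 ∧ c' = 0 ∧ d' = 0) := by
  rintro ⟨rfl, rfl, rfl, rfl⟩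
  obtain ⟨g, hg, hfg⟩ := cubicEquiv_symm h
  have key : ∀ v, binCubic a b c d v = binCubic 0 0 0 0 v := by
    intro v
    rw [← hfg v, binCubic_zero_fn, binCubic_zero_fn]
  exact hne (binCubic_coeff_eq key)

/-! ### Main theorem -/

/-- Every nonzero real binary cubic form can be brought by a real linear
change of variables to exactly one of the four normal forms
`x³/6`, `x²y/2`, `x³/6 + y³/6`, `x²y/2 − xy²/2`. -/
theorem binary_cubic_normal_forms (a b c d : ℝ) (h : ¬(a = 0 ∧ b = 0 ∧ c = 0 ∧ d = 0)) :
    ∃! i : Fin 4, CubicEquiv (binCubic a b c d) (normalFormBinary i) := by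
  obtain ⟨a', b', c', h1⟩ := red0 a b c d
  have hne' : ¬(a' = 0 ∧ b' = 0 ∧ c' = 0) := by
    intro ⟨e1, e2, e3⟩
    exact nonzero_transfer h1 h ⟨e1, e2, e3, rfl⟩
  obtain ⟨i, h2⟩ := red1 hne'
  refine ⟨i, cubicEquiv_trans h1 h2, fun j hj => ?_⟩
  exact normal_unique (cubicEquiv_trans (cubicEquiv_symm hj) (cubicEquiv_trans h1 h2))
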